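/- For distinct nonzero u₁,…,u_{2n}, set ã_j = a(u_j)u_j^{2n-1}, d̃_j = d(u_j)u_j, and let Q be the n×n matrix with entries Q_{ij} = (d̃_{2n-i+1} ã_j - d̃_j ã_{2n-i+1})/(u_j² - u_{2n-i+1}²), and let V be the 2n×2n matrix with entries V_{ij} = d̃_j u_j^{2(i-1)} for i ≤ n and V_{ij} = ã_j u_j^{2(i-n-1)} for i > n. Then ∏_{1≤i<j≤2n} (u_j² - u_i²)^{-1} det V = ∏_{1≤j<k≤n} (u_k² - u_j²)^{-1}(u_{n+k}² - u_{n+j}²)^{-1} det Q. -/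

import Mathlib

open scoped BigOperators

open Matrix Finset Polynomial


lemma det_fromBlocks_diag_generic {F : Type*} [Field F] {m : Type*} [DecidableEq m] [Fintype m]
    (A B : Matrix m m F) (p q : m → F) (hq : ∀ k, q k ≠ 0) :
    (Matrix.fromBlocks A (Matrix.diagonal p) B (Matrix.diagonal q)).det
      = (Matrix.diagonal q * A - Matrix.diagonal p * B).det := by
  have hq' : IsUnit (Matrix.diagonal q).det := by
    rw [Matrix.det_diagonal]
    exact (Finset.prod_ne_zero_iff.2 fun k _ => hq k).isUnit
  have : Invertible (Matrix.diagonal q) := Matrix.invertibleOfIsUnitDet _ hq'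
  have hswap : (Matrix.fromBlocks A (Matrix.diagonal p) B (Matrix.diagonal q)).det
      = (Matrix.fromBlocks (Matrix.diagonal q) B (Matrix.diagonal p) A).det := by
    have : (Matrix.fromBlocks A (Matrix.diagonal p) B (Matrix.diagonal q)) =
        (Matrix.fromBlocks (Matrix.diagonal q) B (Matrix.diagonal p) A).submatrix
          (Equiv.sumComm m m) (Equiv.sumComm m m) := by
      ext i j; cases i <;> cases j <;> rfl
    rw [this, Matrix.det_submatrix_equiv_self]
  rw [hswap, Matrix.det_fromBlocks₁₁, invOf_eq_nonsing_inv]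
  rw [← Matrix.det_mul]
  congr 1
  rw [Matrix.mul_sub]
  congr 1
  have hcomm : Matrix.diagonal q * Matrix.diagonal p = Matrix.diagonal p * Matrix.diagonal q := by
    have hfun : (fun i => q i * p i) = fun i => p i * q i := funext fun i => mul_comm _ _
    rw [Matrix.diagonal_mul_diagonal, Matrix.diagonal_mul_diagonal, hfun]
  calc Matrix.diagonal q * (Matrix.diagonal p * (Matrix.diagonal q)⁻¹ * B)
      = (Matrix.diagonal q * Matrix.diagonal p) * (Matrix.diagonal q)⁻¹ * B := by
        simp only [Matrix.mul_assoc]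
    _ = Matrix.diagonal p * (Matrix.diagonal q * (Matrix.diagonal q)⁻¹) * B := by
        rw [hcomm]; simp only [Matrix.mul_assoc]
    _ = Matrix.diagonal p * B := by rw [Matrix.mul_nonsing_inv _ hq', Matrix.mul_one]

/-- Determinant of a 2×2 block matrix whose right blocks are diagonal. -/
lemma det_fromBlocks_diag {K : Type*} [Field K] {m : Type*} [DecidableEq m] [Fintype m]
    (A B : Matrix m m K) (p q : m → K) :
    (Matrix.fromBlocks A (Matrix.diagonal p) B (Matrix.diagonal q)).det
      = (Matrix.diagonal q * A - Matrix.diagonal p * B).det := by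
  classical
  let ψ : MvPolynomial (m × Bool) K →+* FractionRing (MvPolynomial (m × Bool) K) :=
    algebraMap _ _
  have hψ : Function.Injective ψ := IsFractionRing.injective _ _
  let Ar : Matrix m m (MvPolynomial (m × Bool) K) := A.map MvPolynomial.C
  let Br : Matrix m m (MvPolynomial (m × Bool) K) := B.map MvPolynomial.C
  let Pr : m → MvPolynomial (m × Bool) K := fun k => MvPolynomial.X (k, false)
  let Qr : m → MvPolynomial (m × Bool) K := fun k => MvPolynomial.X (k, true)
  have key : (Matrix.fromBlocks Ar (Matrix.diagonal Pr) Br (Matrix.diagonal Qr)).det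
      = (Matrix.diagonal Qr * Ar - Matrix.diagonal Pr * Br).det := by
    apply hψ
    rw [RingHom.map_det, RingHom.map_det]
    have h1 : ψ.mapMatrix (Matrix.fromBlocks Ar (Matrix.diagonal Pr) Br (Matrix.diagonal Qr))
        = Matrix.fromBlocks (Ar.map ψ) (Matrix.diagonal fun k => ψ (Pr k))
            (Br.map ψ) (Matrix.diagonal fun k => ψ (Qr k)) := by
      show (Matrix.fromBlocks Ar (Matrix.diagonal Pr) Br (Matrix.diagonal Qr)).map ψ = _
      rw [Matrix.fromBlocks_map, Matrix.diagonal_map (map_zero ψ), Matrix.diagonal_map (map_zero ψ)]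
    have h2 : ψ.mapMatrix (Matrix.diagonal Qr * Ar - Matrix.diagonal Pr * Br)
        = Matrix.diagonal (fun k => ψ (Qr k)) * (Ar.map ψ)
            - Matrix.diagonal (fun k => ψ (Pr k)) * (Br.map ψ) := by
      show (Matrix.diagonal Qr * Ar - Matrix.diagonal Pr * Br).map ψ = _
      rw [Matrix.map_sub _ (map_sub ψ), Matrix.map_mul, Matrix.map_mul,
        Matrix.diagonal_map (map_zero ψ), Matrix.diagonal_map (map_zero ψ)]
    rw [h1, h2]
    refine det_fromBlocks_diag_generic _ _ _ _ (fun k => ?_)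
    intro h
    exact (MvPolynomial.X_ne_zero _) (hψ (by simpa using h))
  let φ : MvPolynomial (m × Bool) K →+* K :=
    (MvPolynomial.eval fun v : m × Bool => if v.2 then q v.1 else p v.1)
  have hmain := congrArg φ key
  rw [RingHom.map_det, RingHom.map_det] at hmain
  have hφC : ∀ c : K, φ (MvPolynomial.C c) = c := fun c => MvPolynomial.eval_C c
  have hφP : ∀ k, φ (Pr k) = p k := fun k => by
    show (MvPolynomial.eval _) (MvPolynomial.X _) = _
    rw [MvPolynomial.eval_X]
    rfl
  have hφQ : ∀ k, φ (Qr k) = q k := fun k => by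
    show (MvPolynomial.eval _) (MvPolynomial.X _) = _
    rw [MvPolynomial.eval_X]
    rfl
  have h3 : φ.mapMatrix (Matrix.fromBlocks Ar (Matrix.diagonal Pr) Br (Matrix.diagonal Qr))
      = Matrix.fromBlocks A (Matrix.diagonal p) B (Matrix.diagonal q) := by
    show (Matrix.fromBlocks Ar (Matrix.diagonal Pr) Br (Matrix.diagonal Qr)).map φ = _
    rw [Matrix.fromBlocks_map, Matrix.diagonal_map (map_zero φ), Matrix.diagonal_map (map_zero φ)]
    have e1 : (fun k => φ (Pr k)) = p := funext hφP
    have e2 : (fun k => φ (Qr k)) = q := funext hφQ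
    have e3 : Ar.map φ = A := by ext i j; exact hφC _
    have e4 : Br.map φ = B := by ext i j; exact hφC _
    rw [e1, e2, e3, e4]
  have h4 : φ.mapMatrix (Matrix.diagonal Qr * Ar - Matrix.diagonal Pr * Br)
      = Matrix.diagonal q * A - Matrix.diagonal p * B := by
    show (Matrix.diagonal Qr * Ar - Matrix.diagonal Pr * Br).map φ = _
    rw [Matrix.map_sub _ (map_sub φ), Matrix.map_mul, Matrix.map_mul,
      Matrix.diagonal_map (map_zero φ), Matrix.diagonal_map (map_zero φ)]
    have e1 : (fun k => φ (Qr k)) = q := funext hφQ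
    have e2 : (fun k => φ (Pr k)) = p := funext hφP
    have e3 : Ar.map φ = A := by ext i j; exact hφC _
    have e4 : Br.map φ = B := by ext i j; exact hφC _
    rw [e1, e2, e3, e4]
  rw [h3, h4] at hmain
  exact hmain


lemma prod_pairs_swap {M : Type*} [CommMonoid M] {n : ℕ} (F : Fin n → Fin n → M) :
    ∏ i : Fin n, ∏ j ∈ Finset.Iio i, F i j = ∏ i : Fin n, ∏ j ∈ Finset.Ioi i, F j i :=
  Finset.prod_comm' (by intro a b; simp [and_comm])

lemma prod_pairs_rev {M : Type*} [CommMonoid M] {n : ℕ} (F : Fin n → Fin n → M) :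
    ∏ i : Fin n, ∏ j ∈ Finset.Ioi i, F (Fin.rev j) (Fin.rev i)
      = ∏ i : Fin n, ∏ j ∈ Finset.Ioi i, F i j := by
  rw [Finset.prod_sigma', Finset.prod_sigma']
  refine Finset.prod_nbij' (fun p => ⟨Fin.rev p.2, Fin.rev p.1⟩)
    (fun p => ⟨Fin.rev p.2, Fin.rev p.1⟩) ?_ ?_ ?_ ?_ ?_
  · intro a ha
    simp only [Finset.mem_sigma, Finset.mem_univ, Finset.mem_Ioi, true_and] at ha ⊢
    exact Fin.rev_lt_rev.2 ha
  · intro a ha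
    simp only [Finset.mem_sigma, Finset.mem_univ, Finset.mem_Ioi, true_and] at ha ⊢
    exact Fin.rev_lt_rev.2 ha
  · intro a _; simp [Fin.rev_rev]
  · intro a _; simp [Fin.rev_rev]
  · intro a _; rfl


section Core
variable {K : Type*} [Field K] {n : ℕ}

lemma core_det_eq (f g : Fin (n + n) → K) (x y : Fin n → K)
    (hxy : ∀ j k, x j ≠ y k) (hyy : ∀ k l, k ≠ l → y k ≠ y l) :
    (Matrix.fromBlocks
      (Matrix.of fun i j : Fin n => f (Fin.castAdd n j) * x j ^ (i : ℕ))
      (Matrix.of fun i j : Fin n => f (Fin.natAdd n j) * y j ^ (i : ℕ))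
      (Matrix.of fun i j : Fin n => g (Fin.castAdd n j) * x j ^ (i : ℕ))
      (Matrix.of fun i j : Fin n => g (Fin.natAdd n j) * y j ^ (i : ℕ))).det
    = (∏ j : Fin n, ∏ k : Fin n, (y k - x j)) *
      (Matrix.of fun i j : Fin n =>
        (f (Fin.natAdd n (Fin.rev i)) * g (Fin.castAdd n j)
            - f (Fin.castAdd n j) * g (Fin.natAdd n (Fin.rev i))) / (x j - y (Fin.rev i))).det := by
  classical
  set ℓ : Fin n → Polynomial K :=
    fun k => ∏ l ∈ Finset.univ.erase k, (Polynomial.X - Polynomial.C (y l)) with hℓ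
  set w : Fin n → K := fun k => ∏ l ∈ Finset.univ.erase k, (y k - y l) with hw
  set L : Matrix (Fin n) (Fin n) K := Matrix.of fun k i => (ℓ k).coeff i with hL
  have hdeg : ∀ k, (ℓ k).natDegree < n := by
    intro k
    have h1 : (ℓ k).natDegree = ∑ l ∈ Finset.univ.erase k, (Polynomial.X - Polynomial.C (y l)).natDegree :=
      Polynomial.natDegree_prod_of_monic _ _ (fun l _ => Polynomial.monic_X_sub_C _)
    have h2 : (ℓ k).natDegree = (Finset.univ.erase k).card := by
      rw [h1]; simp [Polynomial.natDegree_X_sub_C]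
    have h3 : (Finset.univ.erase k).card = n - 1 := by
      rw [Finset.card_erase_of_mem (Finset.mem_univ k), Finset.card_univ, Fintype.card_fin]
    have := k.pos
    omega
  have heval : ∀ k t, Polynomial.eval t (ℓ k) = ∏ l ∈ Finset.univ.erase k, (t - y l) := by
    intro k t; simp [hℓ, Polynomial.eval_prod]
  have hsum : ∀ k t, ∑ i : Fin n, (ℓ k).coeff i * t ^ (i : ℕ) = Polynomial.eval t (ℓ k) := by
    intro k t
    rw [Polynomial.eval_eq_sum_range' (hdeg k),
      Fin.sum_univ_eq_sum_range (fun i => (ℓ k).coeff i * t ^ i)]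
  have hevaly : ∀ k l, Polynomial.eval (y l) (ℓ k) = if k = l then w k else 0 := by
    intro k l
    by_cases h : k = l
    · subst h; rw [heval, if_pos rfl]
    · rw [heval, if_neg h]
      refine Finset.prod_eq_zero (Finset.mem_erase.2 ⟨fun hlk => h hlk.symm, Finset.mem_univ l⟩) ?_
      simp
  have hwne : ∀ k, w k ≠ 0 := by
    intro k
    refine Finset.prod_ne_zero_iff.2 fun l hl => sub_ne_zero.2 ?_
    exact hyy k l fun hkl => (Finset.mem_erase.1 hl).1 hkl.symm
  -- matrices
  set Fx := Matrix.of fun i j : Fin n => f (Fin.castAdd n j) * x j ^ (i : ℕ) with hFx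
  set Fy := Matrix.of fun i j : Fin n => f (Fin.natAdd n j) * y j ^ (i : ℕ) with hFy
  set Gx := Matrix.of fun i j : Fin n => g (Fin.castAdd n j) * x j ^ (i : ℕ) with hGx
  set Gy := Matrix.of fun i j : Fin n => g (Fin.natAdd n j) * y j ^ (i : ℕ) with hGy
  set A1 := Matrix.of fun k j : Fin n => f (Fin.castAdd n j) * Polynomial.eval (x j) (ℓ k) with hA1
  set B1 := Matrix.of fun k j : Fin n => g (Fin.castAdd n j) * Polynomial.eval (x j) (ℓ k) with hB1
  set d1 : Fin n → K := fun k => f (Fin.natAdd n k) * w k with hd1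
  set d2 : Fin n → K := fun k => g (Fin.natAdd n k) * w k with hd2
  have hmulx : ∀ (h : Fin (n+n) → K), L * (Matrix.of fun i j : Fin n => h (Fin.castAdd n j) * x j ^ (i : ℕ))
      = Matrix.of fun k j : Fin n => h (Fin.castAdd n j) * Polynomial.eval (x j) (ℓ k) := by
    intro h
    ext k j
    simp only [Matrix.mul_apply, Matrix.of_apply, hL]
    rw [← hsum k (x j), Finset.mul_sum]
    exact Finset.sum_congr rfl fun i _ => by ring
  have hmuly : ∀ (h : Fin (n+n) → K), L * (Matrix.of fun i j : Fin n => h (Fin.natAdd n j) * y j ^ (i : ℕ))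
      = Matrix.diagonal (fun k => h (Fin.natAdd n k) * w k) := by
    intro h
    ext k l
    simp only [Matrix.mul_apply, Matrix.of_apply, hL]
    have : ∑ i : Fin n, (ℓ k).coeff i * (h (Fin.natAdd n l) * y l ^ (i : ℕ))
        = h (Fin.natAdd n l) * Polynomial.eval (y l) (ℓ k) := by
      rw [← hsum k (y l), Finset.mul_sum]
      exact Finset.sum_congr rfl fun i _ => by ring
    rw [this, hevaly k l]
    by_cases hkl : k = l
    · subst hkl; simp [Matrix.diagonal_apply_eq]
    · simp [Matrix.diagonal_apply_ne _ hkl, if_neg hkl]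
  have hblockmul : Matrix.fromBlocks L 0 0 L * Matrix.fromBlocks Fx Fy Gx Gy
      = Matrix.fromBlocks A1 (Matrix.diagonal d1) B1 (Matrix.diagonal d2) := by
    rw [Matrix.fromBlocks_multiply]
    rw [hFx, hFy, hGx, hGy, hmulx f, hmuly f, hmulx g, hmuly g]
    simp [hA1, hB1, hd1, hd2, Matrix.zero_mul, Matrix.mul_zero]
  -- Vandermonde facts
  set Vy : Matrix (Fin n) (Fin n) K := Matrix.of fun i l : Fin n => y l ^ (i : ℕ) with hVy
  set Δ : K := ∏ i : Fin n, ∏ j ∈ Finset.Ioi i, (y j - y i) with hΔ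
  have hΔne : Δ ≠ 0 := by
    rw [hΔ]
    refine Finset.prod_ne_zero_iff.2 fun i _ => Finset.prod_ne_zero_iff.2 fun j hj => sub_ne_zero.2 ?_
    exact hyy j i (ne_of_gt (Finset.mem_Ioi.1 hj))
  have hdetVy : Vy.det = Δ := by
    have : Vy = (Matrix.vandermonde y).transpose := by
      ext i l; simp [hVy, Matrix.vandermonde]
    rw [this, Matrix.det_transpose, Matrix.det_vandermonde]
  have hLVy : L * Vy = Matrix.diagonal w := by
    ext k l
    simp only [Matrix.mul_apply, Matrix.of_apply, hL, hVy]
    rw [hsum k (y l), hevaly k l]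
    by_cases hkl : k = l
    · subst hkl; simp [Matrix.diagonal_apply_eq]
    · simp [Matrix.diagonal_apply_ne _ hkl, if_neg hkl]
  have hdetL : L.det * Δ = ∏ k, w k := by
    rw [← hdetVy, ← Matrix.det_mul, hLVy, Matrix.det_diagonal]
  -- signs
  set ε : K := ∏ i : Fin n, ∏ j ∈ Finset.Ioi i, (-1 : K) with hε
  have hε2 : ε * ε = 1 := by
    rw [hε, ← Finset.prod_mul_distrib]
    rw [show (∏ i : Fin n, ((∏ j ∈ Finset.Ioi i, (-1:K)) * ∏ j ∈ Finset.Ioi i, (-1:K)))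
        = ∏ i : Fin n, ∏ j ∈ Finset.Ioi i, ((-1:K) * (-1)) from
      Finset.prod_congr rfl fun i _ => (Finset.prod_mul_distrib).symm]
    simp
  have hprodw : ∏ k, w k = ε * (Δ * Δ) := by
    have herase : ∀ k : Fin n, Finset.univ.erase k = Finset.Iio k ∪ Finset.Ioi k := by
      intro k; ext l
      simp only [Finset.mem_erase, Finset.mem_univ, and_true, Finset.mem_union,
        Finset.mem_Iio, Finset.mem_Ioi]
      exact ⟨fun h => h.lt_or_gt, fun h => h.elim ne_of_lt ne_of_gt⟩
    have hdisj : ∀ k : Fin n, Disjoint (Finset.Iio k) (Finset.Ioi k) := by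
      intro k
      refine Finset.disjoint_left.2 fun l hl hl' => ?_
      exact absurd (Finset.mem_Ioi.1 hl') (not_lt_of_gt (Finset.mem_Iio.1 hl))
    calc ∏ k, w k = ∏ k, ((∏ l ∈ Finset.Iio k, (y k - y l)) * ∏ l ∈ Finset.Ioi k, (y k - y l)) := by
          refine Finset.prod_congr rfl fun k _ => ?_
          show (∏ l ∈ Finset.univ.erase k, (y k - y l)) = _
          rw [herase k, Finset.prod_union (hdisj k)]
      _ = (∏ k, ∏ l ∈ Finset.Iio k, (y k - y l)) * ∏ k, ∏ l ∈ Finset.Ioi k, (y k - y l) :=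
          Finset.prod_mul_distrib
      _ = Δ * (ε * Δ) := by
          congr 1
          · rw [prod_pairs_swap (fun a b => y a - y b), hΔ]
          · have : ∀ k : Fin n, ∀ l ∈ Finset.Ioi k, (y k - y l) = (-1) * (y l - y k) := by
              intro k l _; ring
            calc ∏ k, ∏ l ∈ Finset.Ioi k, (y k - y l)
                = ∏ k, ∏ l ∈ Finset.Ioi k, ((-1) * (y l - y k)) :=
                  Finset.prod_congr rfl fun k _ => Finset.prod_congr rfl fun l hl => this k l hl
              _ = ε * Δ := by
                  rw [hε, hΔ, ← Finset.prod_mul_distrib]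
                  exact Finset.prod_congr rfl fun k _ => Finset.prod_mul_distrib
      _ = ε * (Δ * Δ) := by ring
  have hLdet : L.det = ε * Δ := by
    have : L.det * Δ = (ε * Δ) * Δ := by rw [hdetL, hprodw]; ring
    exact mul_right_cancel₀ hΔne this
  -- the sign of the reversal permutation
  set sK : K := ((Equiv.Perm.sign (Fin.revPerm : Equiv.Perm (Fin n)) : ℤ) : K) with hsK
  have hsign : ∀ (M : Matrix (Fin n) (Fin n) K),
      (Matrix.of fun i j : Fin n => M (Fin.rev i) j).det = sK * M.det := by
    intro M
    have h := Matrix.det_permute (Fin.revPerm : Equiv.Perm (Fin n)) M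
    have h2 : (Matrix.of fun i j : Fin n => M (Fin.rev i) j) = M.submatrix Fin.revPerm id := rfl
    rw [h2, h, hsK]

  have hsε : sK = ε := by
    have h1 : (Matrix.vandermonde (fun i : Fin n => y (Fin.rev i))).det = sK * Δ := by
      have h2 : (Matrix.vandermonde (fun i : Fin n => y (Fin.rev i)))
          = Matrix.of fun i j : Fin n => (Matrix.vandermonde y) (Fin.rev i) j := rfl
      rw [h2, hsign, Matrix.det_vandermonde, hΔ]
    have h3 : (Matrix.vandermonde (fun i : Fin n => y (Fin.rev i))).det = ε * Δ := by
      rw [Matrix.det_vandermonde]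
      calc ∏ i : Fin n, ∏ j ∈ Finset.Ioi i, (y (Fin.rev j) - y (Fin.rev i))
          = ∏ i : Fin n, ∏ j ∈ Finset.Ioi i, ((-1) * (y (Fin.rev i) - y (Fin.rev j))) :=
            Finset.prod_congr rfl fun i _ => Finset.prod_congr rfl fun j _ => by ring
        _ = ε * ∏ i : Fin n, ∏ j ∈ Finset.Ioi i, (y (Fin.rev i) - y (Fin.rev j)) := by
            rw [hε, ← Finset.prod_mul_distrib]
            exact Finset.prod_congr rfl fun k _ => Finset.prod_mul_distrib
        _ = ε * Δ := by
            rw [prod_pairs_rev (fun a b => y b - y a), hΔ]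
    have := h1.symm.trans h3
    exact mul_right_cancel₀ hΔne this
  -- determinant computations
  set Qhat : Matrix (Fin n) (Fin n) K := Matrix.of fun k j : Fin n =>
    (f (Fin.natAdd n k) * g (Fin.castAdd n j) - f (Fin.castAdd n j) * g (Fin.natAdd n k))
      / (x j - y k) with hQhat
  have hentry : Matrix.diagonal d2 * A1 - Matrix.diagonal d1 * B1
      = Matrix.of fun k j : Fin n => (-(w k)) * ((∏ l, (x j - y l)) * Qhat k j) := by
    ext k j
    have hne : x j - y k ≠ 0 := sub_ne_zero.2 (hxy j k)
    have hprod : (∏ l, (x j - y l)) = (x j - y k) * ∏ l ∈ Finset.univ.erase k, (x j - y l) :=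
      (Finset.mul_prod_erase _ _ (Finset.mem_univ k)).symm
    simp only [Matrix.sub_apply, Matrix.diagonal_mul, Matrix.of_apply, hA1, hB1, hd1, hd2, hQhat]
    rw [heval k (x j), hprod]
    field_simp
    ring
  have hdet1 : L.det * L.det * (Matrix.fromBlocks Fx Fy Gx Gy).det
      = (Matrix.fromBlocks A1 (Matrix.diagonal d1) B1 (Matrix.diagonal d2)).det := by
    rw [← hblockmul, Matrix.det_mul, Matrix.det_fromBlocks_zero₁₂]
  have hdet2 : (Matrix.fromBlocks A1 (Matrix.diagonal d1) B1 (Matrix.diagonal d2)).det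
      = (Matrix.diagonal d2 * A1 - Matrix.diagonal d1 * B1).det :=
    det_fromBlocks_diag A1 B1 d1 d2
  have hdet3 : (Matrix.diagonal d2 * A1 - Matrix.diagonal d1 * B1).det
      = (∏ k, -(w k)) * ((∏ j, ∏ l, (x j - y l)) * Qhat.det) := by
    rw [hentry]
    rw [show (Matrix.of fun k j : Fin n => (-(w k)) * ((∏ l, (x j - y l)) * Qhat k j))
        = Matrix.of fun k j : Fin n => (fun a => -(w a)) k *
            ((Matrix.of fun k j : Fin n => (∏ l, (x j - y l)) * Qhat k j) k j) from rfl]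
    rw [Matrix.det_mul_column]
    congr 1
    rw [show (Matrix.of fun k j : Fin n => (∏ l, (x j - y l)) * Qhat k j)
        = Matrix.of fun k j : Fin n => (fun b => ∏ l, (x b - y l)) j * Qhat k j from rfl]
    rw [Matrix.det_mul_row]
  -- assembling
  have hQ : (Matrix.of fun i j : Fin n =>
        (f (Fin.natAdd n (Fin.rev i)) * g (Fin.castAdd n j)
            - f (Fin.castAdd n j) * g (Fin.natAdd n (Fin.rev i))) / (x j - y (Fin.rev i)))
      = Matrix.of fun i j : Fin n => Qhat (Fin.rev i) j := rfl
  have hQdet : (Matrix.of fun i j : Fin n =>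
        (f (Fin.natAdd n (Fin.rev i)) * g (Fin.castAdd n j)
            - f (Fin.castAdd n j) * g (Fin.natAdd n (Fin.rev i))) / (x j - y (Fin.rev i))).det
      = ε * Qhat.det := by
    rw [hQ, hsign Qhat, hsε]
  -- powers of -1
  have hm : (∏ _k : Fin n, (-1 : K)) = (-1 : K) ^ n := by
    rw [Finset.prod_const]; simp
  have hmm : ((-1 : K) ^ n) ^ n = (-1 : K) ^ n := by
    rcases Nat.even_or_odd n with he | ho
    · rw [he.neg_one_pow]; simp
    · rw [ho.neg_one_pow]; simp [ho.neg_one_pow]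
  have hC : (∏ j : Fin n, ∏ k : Fin n, (y k - x j))
      = (-1 : K) ^ n * (∏ j, ∏ l, (x j - y l)) := by
    calc ∏ j : Fin n, ∏ k : Fin n, (y k - x j)
        = ∏ j : Fin n, ∏ k : Fin n, ((-1) * (x j - y k)) :=
          Finset.prod_congr rfl fun j _ => Finset.prod_congr rfl fun k _ => by ring
      _ = ∏ j : Fin n, ((-1 : K) ^ n * ∏ k : Fin n, (x j - y k)) := by
          refine Finset.prod_congr rfl fun j _ => ?_
          rw [Finset.prod_mul_distrib, hm]
      _ = ((-1 : K) ^ n) ^ n * ∏ j, ∏ l, (x j - y l) := by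
          rw [Finset.prod_mul_distrib, Finset.prod_const]
          congr 1
          simp [Finset.card_univ]
      _ = (-1 : K) ^ n * (∏ j, ∏ l, (x j - y l)) := by rw [hmm]
  have hnegw : (∏ k, -(w k)) = (-1 : K) ^ n * ∏ k, w k := by
    calc ∏ k, -(w k) = ∏ k : Fin n, ((-1) * w k) := Finset.prod_congr rfl fun k _ => by ring
      _ = (-1 : K) ^ n * ∏ k, w k := by rw [Finset.prod_mul_distrib, hm]
  -- final cancellation
  have hfinal : (Δ * Δ) * (Matrix.fromBlocks Fx Fy Gx Gy).det
      = (Δ * Δ) * ((∏ j : Fin n, ∏ k : Fin n, (y k - x j)) *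
          (Matrix.of fun i j : Fin n =>
            (f (Fin.natAdd n (Fin.rev i)) * g (Fin.castAdd n j)
                - f (Fin.castAdd n j) * g (Fin.natAdd n (Fin.rev i)))
              / (x j - y (Fin.rev i))).det) := by
    have hL2 : L.det * L.det = Δ * Δ := by
      rw [hLdet]
      calc (ε * Δ) * (ε * Δ) = (ε * ε) * (Δ * Δ) := by ring
        _ = Δ * Δ := by rw [hε2]; ring
    calc (Δ * Δ) * (Matrix.fromBlocks Fx Fy Gx Gy).det
        = L.det * L.det * (Matrix.fromBlocks Fx Fy Gx Gy).det := by rw [hL2]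
      _ = (∏ k, -(w k)) * ((∏ j, ∏ l, (x j - y l)) * Qhat.det) := by
          rw [hdet1, hdet2, hdet3]
      _ = (-1 : K) ^ n * (ε * (Δ * Δ)) * ((∏ j, ∏ l, (x j - y l)) * Qhat.det) := by
          rw [hnegw, hprodw]
      _ = (Δ * Δ) * (((-1 : K) ^ n * (∏ j, ∏ l, (x j - y l))) * (ε * Qhat.det)) := by ring
      _ = _ := by rw [← hC, ← hQdet]
  exact mul_left_cancel₀ (mul_ne_zero hΔne hΔne) hfinal

end Core

/-- Equivalence of the `2n×2n` and `n×n` determinant representations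
of the scalar product of off-shell Bethe states.  With `ã_j = a(u_j)u_j^{2n-1}`,
`d̃_j = d(u_j)u_j`, `Q_{ij} = (d̃_{2n-i+1}ã_j - d̃_jã_{2n-i+1})/(u_j² - u_{2n-i+1}²)` and
`V_{ij} = d̃_j u_j^{2(i-1)}` (`i ≤ n`), `V_{ij} = ã_j u_j^{2(i-n-1)}` (`i > n`):
`∏_{i<j≤2n}(u_j²-u_i²)⁻¹ det V = ∏_{j<k≤n}(u_k²-u_j²)⁻¹(u_{n+k}²-u_{n+j}²)⁻¹ det Q`.
(Indices are zero-based: `u_{2n-i+1}` becomes `u (Fin.rev (Fin.castAdd n i))`.) -/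
theorem scalar_product_det_equivalence {K : Type*} [Field K] (n : ℕ)
    (a d : K → K) (u : Fin (n + n) → K) (hu0 : ∀ i, u i ≠ 0)
    (husq : ∀ i j, i ≠ j → u i ^ 2 ≠ u j ^ 2) :
    (∏ i : Fin (n + n), ∏ j ∈ Finset.Ioi i, (u j ^ 2 - u i ^ 2))⁻¹ *
        Matrix.det (Matrix.of fun i j : Fin (n + n) =>
          if (i : ℕ) < n then (d (u j) * u j) * u j ^ (2 * (i : ℕ))
          else (a (u j) * u j ^ (2 * n - 1)) * u j ^ (2 * ((i : ℕ) - n)))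
      = (∏ j : Fin n, ∏ k ∈ Finset.Ioi j,
            ((u (Fin.castAdd n k) ^ 2 - u (Fin.castAdd n j) ^ 2) *
              (u (Fin.natAdd n k) ^ 2 - u (Fin.natAdd n j) ^ 2)))⁻¹ *
          Matrix.det (Matrix.of fun i j : Fin n =>
            ((d (u (Fin.rev (Fin.castAdd n i))) * u (Fin.rev (Fin.castAdd n i))) *
                  (a (u (Fin.castAdd n j)) * u (Fin.castAdd n j) ^ (2 * n - 1)) -
                (d (u (Fin.castAdd n j)) * u (Fin.castAdd n j)) *
                  (a (u (Fin.rev (Fin.castAdd n i))) *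
                    u (Fin.rev (Fin.castAdd n i)) ^ (2 * n - 1))) /
              (u (Fin.castAdd n j) ^ 2 - u (Fin.rev (Fin.castAdd n i)) ^ 2)) := by
  classical
  -- abbreviations
  set f : Fin (n + n) → K := fun j => d (u j) * u j with hf
  set g : Fin (n + n) → K := fun j => a (u j) * u j ^ (2 * n - 1) with hg
  set x : Fin n → K := fun j => u (Fin.castAdd n j) ^ 2 with hx
  set y : Fin n → K := fun k => u (Fin.natAdd n k) ^ 2 with hy
  have hcne : ∀ j k : Fin n, (Fin.castAdd n j : Fin (n + n)) ≠ Fin.natAdd n k := by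
    intro j k h
    have := congrArg Fin.val h
    simp only [Fin.coe_castAdd, Fin.coe_natAdd] at this
    omega
  have hxy : ∀ j k, x j ≠ y k := fun j k => husq _ _ (hcne j k)
  have hyy : ∀ k l : Fin n, k ≠ l → y k ≠ y l := by
    intro k l hkl
    refine husq _ _ fun h => hkl ?_
    have := congrArg Fin.val h
    simp only [Fin.coe_natAdd] at this
    exact Fin.ext (by omega)
  have hxx : ∀ k l : Fin n, k ≠ l → x k ≠ x l := by
    intro k l hkl
    refine husq _ _ fun h => hkl ?_
    have := congrArg Fin.val h
    simp only [Fin.coe_castAdd] at this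
    exact Fin.ext this
  -- rev identity
  have hrev : ∀ i : Fin n, Fin.rev (Fin.castAdd n i) = Fin.natAdd n (Fin.rev i) := by
    intro i
    have hi := i.isLt
    ext
    simp only [Fin.val_rev, Fin.coe_castAdd, Fin.coe_natAdd]
    omega
  -- the 2n×2n determinant equals the block determinant
  have hVdet : Matrix.det (Matrix.of fun i j : Fin (n + n) =>
        if (i : ℕ) < n then (d (u j) * u j) * u j ^ (2 * (i : ℕ))
        else (a (u j) * u j ^ (2 * n - 1)) * u j ^ (2 * ((i : ℕ) - n)))
      = (Matrix.fromBlocks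
          (Matrix.of fun i j : Fin n => f (Fin.castAdd n j) * x j ^ (i : ℕ))
          (Matrix.of fun i j : Fin n => f (Fin.natAdd n j) * y j ^ (i : ℕ))
          (Matrix.of fun i j : Fin n => g (Fin.castAdd n j) * x j ^ (i : ℕ))
          (Matrix.of fun i j : Fin n => g (Fin.natAdd n j) * y j ^ (i : ℕ))).det := by
    rw [← Matrix.det_submatrix_equiv_self (finSumFinEquiv : Fin n ⊕ Fin n ≃ Fin (n + n))]
    congr 1
    ext s t
    cases s with
    | inl i =>
      cases t with
      | inl j =>
        simp only [Matrix.submatrix_apply, finSumFinEquiv_apply_left, finSumFinEquiv_apply_right,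
          Matrix.fromBlocks_apply₁₁, Matrix.of_apply, Fin.coe_castAdd]
        rw [if_pos i.isLt, hf, hx, pow_mul]
      | inr j =>
        simp only [Matrix.submatrix_apply, finSumFinEquiv_apply_left, finSumFinEquiv_apply_right,
          Matrix.fromBlocks_apply₁₂, Matrix.of_apply, Fin.coe_castAdd]
        rw [if_pos i.isLt, hf, hy, pow_mul]
    | inr i =>
      cases t with
      | inl j =>
        simp only [Matrix.submatrix_apply, finSumFinEquiv_apply_left, finSumFinEquiv_apply_right,
          Matrix.fromBlocks_apply₂₁, Matrix.of_apply, Fin.coe_natAdd]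
        rw [if_neg (by omega), hg, hx, pow_mul]
        congr 2
        omega
      | inr j =>
        simp only [Matrix.submatrix_apply, finSumFinEquiv_apply_left, finSumFinEquiv_apply_right,
          Matrix.fromBlocks_apply₂₂, Matrix.of_apply, Fin.coe_natAdd]
        rw [if_neg (by omega), hg, hy, pow_mul]
        congr 2
        omega
  -- core identity
  have hcore := core_det_eq f g x y hxy hyy
  -- the RHS matrix is the core Q matrix
  have hQeq : (Matrix.of fun i j : Fin n =>
        ((d (u (Fin.rev (Fin.castAdd n i))) * u (Fin.rev (Fin.castAdd n i))) *
              (a (u (Fin.castAdd n j)) * u (Fin.castAdd n j) ^ (2 * n - 1)) -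
            (d (u (Fin.castAdd n j)) * u (Fin.castAdd n j)) *
              (a (u (Fin.rev (Fin.castAdd n i))) *
                u (Fin.rev (Fin.castAdd n i)) ^ (2 * n - 1))) /
          (u (Fin.castAdd n j) ^ 2 - u (Fin.rev (Fin.castAdd n i)) ^ 2))
      = (Matrix.of fun i j : Fin n =>
          (f (Fin.natAdd n (Fin.rev i)) * g (Fin.castAdd n j)
              - f (Fin.castAdd n j) * g (Fin.natAdd n (Fin.rev i))) / (x j - y (Fin.rev i))) := by
    ext i j
    simp only [Matrix.of_apply, hrev i, hf, hg, hx, hy]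
  -- product splitting
  set P : K := ∏ i : Fin (n + n), ∏ j ∈ Finset.Ioi i, (u j ^ 2 - u i ^ 2) with hP
  set R : K := ∏ j : Fin n, ∏ k ∈ Finset.Ioi j,
      ((u (Fin.castAdd n k) ^ 2 - u (Fin.castAdd n j) ^ 2) *
        (u (Fin.natAdd n k) ^ 2 - u (Fin.natAdd n j) ^ 2)) with hR
  set C : K := ∏ j : Fin n, ∏ k : Fin n, (y k - x j) with hC
  have hIoiIf : ∀ (N : ℕ) (G : Fin N → Fin N → K) (I : Fin N),
      ∏ J ∈ Finset.Ioi I, G I J = ∏ J : Fin N, if I < J then G I J else 1 := by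
    intro N G I
    rw [← Finset.prod_filter]
    congr 1
    ext J
    simp
  have hsplit : P = R * C := by
    rw [hP]
    have e1 : ∀ I : Fin (n + n), ∏ J ∈ Finset.Ioi I, (u J ^ 2 - u I ^ 2)
        = ∏ J : Fin (n + n), if I < J then u J ^ 2 - u I ^ 2 else 1 :=
      fun I => hIoiIf (n + n) (fun I J => u J ^ 2 - u I ^ 2) I
    calc ∏ I : Fin (n + n), ∏ J ∈ Finset.Ioi I, (u J ^ 2 - u I ^ 2)
        = ∏ I : Fin (n + n), ∏ J : Fin (n + n), (if I < J then u J ^ 2 - u I ^ 2 else 1) :=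
          Finset.prod_congr rfl fun I _ => e1 I
      _ = (∏ i : Fin n, ∏ J : Fin (n + n),
              (if (Fin.castAdd n i : Fin (n+n)) < J then u J ^ 2 - u (Fin.castAdd n i) ^ 2 else 1)) *
          ∏ i : Fin n, ∏ J : Fin (n + n),
              (if (Fin.natAdd n i : Fin (n+n)) < J then u J ^ 2 - u (Fin.natAdd n i) ^ 2 else 1) := by
          rw [Fin.prod_univ_add]
      _ = ((∏ i : Fin n, ∏ j : Fin n, (if i < j then x j - x i else 1)) *
            ∏ i : Fin n, ∏ j : Fin n, (y j - x i)) *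
          ((∏ i : Fin n, ∏ j : Fin n, (1 : K)) *
            ∏ i : Fin n, ∏ j : Fin n, (if i < j then y j - y i else 1)) := by
          refine congrArg₂ (· * ·) ?_ ?_
          · rw [← Finset.prod_mul_distrib]
            refine Finset.prod_congr rfl fun i _ => ?_
            rw [Fin.prod_univ_add]
            refine congrArg₂ (· * ·) ?_ ?_
            · refine Finset.prod_congr rfl fun j _ => if_congr ?_ rfl rfl
              rw [Fin.lt_def, Fin.lt_def, Fin.coe_castAdd, Fin.coe_castAdd]
            · refine Finset.prod_congr rfl fun j _ => ?_
              have hlt : (Fin.castAdd n i : Fin (n+n)) < Fin.natAdd n j := by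
                simp only [Fin.lt_def, Fin.coe_castAdd, Fin.coe_natAdd]
                have := i.isLt
                omega
              rw [if_pos hlt]
          · rw [← Finset.prod_mul_distrib]
            refine Finset.prod_congr rfl fun i _ => ?_
            rw [Fin.prod_univ_add]
            refine congrArg₂ (· * ·) ?_ ?_
            · refine Finset.prod_congr rfl fun j _ => ?_
              have hnlt : ¬ ((Fin.natAdd n i : Fin (n+n)) < Fin.castAdd n j) := by
                simp only [Fin.lt_def, Fin.coe_castAdd, Fin.coe_natAdd, not_lt]
                have := j.isLt
                omega
              rw [if_neg hnlt]
            · refine Finset.prod_congr rfl fun j _ => if_congr ?_ rfl rfl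
              rw [Fin.lt_def, Fin.lt_def, Fin.coe_natAdd, Fin.coe_natAdd]
              omega
      _ = R * C := by
          simp only [Finset.prod_const_one, one_mul]
          rw [hR, hC]
          have hR' : (∏ i : Fin n, ∏ j : Fin n, (if i < j then x j - x i else 1)) *
              (∏ i : Fin n, ∏ j : Fin n, (if i < j then y j - y i else 1))
              = ∏ j : Fin n, ∏ k ∈ Finset.Ioi j,
                  ((u (Fin.castAdd n k) ^ 2 - u (Fin.castAdd n j) ^ 2) *
                    (u (Fin.natAdd n k) ^ 2 - u (Fin.natAdd n j) ^ 2)) := by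
            rw [← Finset.prod_mul_distrib]
            refine Finset.prod_congr rfl fun i _ => ?_
            rw [← Finset.prod_mul_distrib]
            rw [hIoiIf n (fun j k => (u (Fin.castAdd n k) ^ 2 - u (Fin.castAdd n j) ^ 2) *
              (u (Fin.natAdd n k) ^ 2 - u (Fin.natAdd n j) ^ 2)) i]
            refine Finset.prod_congr rfl fun j _ => ?_
            by_cases h : i < j
            · rw [if_pos h, if_pos h, if_pos h]
            · rw [if_neg h, if_neg h, if_neg h, one_mul]
          rw [← hR']
          ring
  -- nonvanishing
  have hRne : R ≠ 0 := by
    rw [hR]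
    refine Finset.prod_ne_zero_iff.2 fun j _ => Finset.prod_ne_zero_iff.2 fun k hk => ?_
    have hjk : j ≠ k := ne_of_lt (Finset.mem_Ioi.1 hk)
    exact mul_ne_zero (sub_ne_zero.2 (hxx k j hjk.symm)) (sub_ne_zero.2 (hyy k j hjk.symm))
  have hCne : C ≠ 0 := by
    rw [hC]
    exact Finset.prod_ne_zero_iff.2 fun j _ => Finset.prod_ne_zero_iff.2 fun k _ =>
      sub_ne_zero.2 (Ne.symm (hxy j k))
  -- conclude
  rw [hVdet, hQeq, hcore, hsplit]
  rw [mul_inv]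
  field_simp
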